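/- Let A be a core redex-algebra and A/≈ its minimization via the iterated refinement of the initial indistinguishability equivalence. Then the quotient operations are well-defined and A/≈ is a core redex-algebra equivalent to A, i.e., L(A/≈) = L(A). -/
import Mathlib


namespace TRSStmt

/-- First-order terms over a signature `F` with arity function `ar` and variables `V`. -/
inductive Tm (F : Type) (ar : F → ℕ) (V : Type) : Type
  | var : V → Tm F ar V
  | app : (f : F) → (Fin (ar f) → Tm F ar V) → Tm F ar V

variable {F : Type} {ar : F → ℕ} {V W A : Type}

/-- Interpretation of a term in a `Σ`-algebra, given an assignment. -/
def Tm.eval (I : (f : F) → (Fin (ar f) → A) → A) (α : V → A) : Tm F ar V → A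
  | .var x => α x
  | .app f ts => I f (fun i => (ts i).eval I α)

/-- Homomorphic extension of a substitution. -/
def Tm.subst (σ : V → Tm F ar W) : Tm F ar V → Tm F ar W
  | .var x => σ x
  | .app f ts => .app f (fun i => (ts i).subst σ)

/-- A variable occurs in a term. -/
def Tm.occurs (x : V) : Tm F ar V → Prop
  | .var y => y = x
  | .app _ ts => ∃ i, (ts i).occurs x

/-- Subterm at a position (0-indexed). -/
def Tm.subAt : Tm F ar V → List ℕ → Option (Tm F ar V)
  | t, [] => some t
  | .var _, _ :: _ => none
  | .app f ts, i :: p => if h : i < ar f then (ts ⟨i, h⟩).subAt p else none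

/-- Replace the subterm at a position. -/
def Tm.replaceAt : Tm F ar V → List ℕ → Tm F ar V → Option (Tm F ar V)
  | _, [], s => some s
  | .var _, _ :: _, _ => none
  | .app f ts, i :: p, s =>
      if h : i < ar f then
        ((ts ⟨i, h⟩).replaceAt p s).map (fun u => .app f (Function.update ts ⟨i, h⟩ u))
      else none

/-- The root symbol of a term (if any). -/
def Tm.rootSym : Tm F ar V → Option F
  | .var _ => none
  | .app f _ => some f

/-- The function symbol at a position. -/
def Tm.symAt (t : Tm F ar V) (p : List ℕ) : Option F := (t.subAt p).bind Tm.rootSym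

/-- A rewrite rule is a pair of terms. -/
abbrev Rule (F : Type) (ar : F → ℕ) (V : Type) := Tm F ar V × Tm F ar V

/-- A set of rules is a TRS: left-hand sides are no variables and
    right-hand side variables occur on the left. -/
def IsTRS (R : Set (Rule F ar V)) : Prop :=
  ∀ lr ∈ R, (∀ x : V, lr.1 ≠ Tm.var x) ∧ ∀ x : V, lr.2.occurs x → lr.1.occurs x

/-- `t` is a redex with respect to `R`. -/
def IsRedex (R : Set (Rule F ar V)) (t : Tm F ar W) : Prop :=
  ∃ lr ∈ R, ∃ σ : V → Tm F ar W, t = lr.1.subst σ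

/-- Rewrite step at position `p`. -/
def RewAt (R : Set (Rule F ar V)) (p : List ℕ) (t u : Tm F ar W) : Prop :=
  ∃ lr ∈ R, ∃ σ : V → Tm F ar W,
    t.subAt p = some (lr.1.subst σ) ∧ t.replaceAt p (lr.2.subst σ) = some u

/-- Outermost rewrite step at position `p`: no redex strictly above `p`. -/
def OutAt (R : Set (Rule F ar V)) (p : List ℕ) (t u : Tm F ar W) : Prop :=
  RewAt R p t u ∧
    ∀ q, q <+: p → q ≠ p → ∀ s, t.subAt q = some s → ¬ IsRedex R s

/-- Outermost rewrite step. -/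
def OStep (R : Set (Rule F ar V)) (t u : Tm F ar W) : Prop := ∃ p, OutAt R p t u

/-- μ-replacing positions for a replacement map `μ`. -/
inductive MuPos (μ : (f : F) → Fin (ar f) → Prop) : Tm F ar V → List ℕ → Prop
  | nil (t : Tm F ar V) : MuPos μ t []
  | cons (f : F) (ts : Fin (ar f) → Tm F ar V) (i : Fin (ar f)) (p : List ℕ) :
      μ f i → MuPos μ (ts i) p → MuPos μ (Tm.app f ts) (i.val :: p)

/-- Context-sensitive (μ-)rewrite step. -/
def MuStep (R : Set (Rule F ar V)) (μ : (f : F) → Fin (ar f) → Prop)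
    (t u : Tm F ar W) : Prop :=
  ∃ p, RewAt R p t u ∧ MuPos μ t p

/-- No infinite sequence for a relation (termination / strong normalization). -/
def NoInf {τ : Type _} (r : τ → τ → Prop) : Prop :=
  ¬ ∃ g : ℕ → τ, ∀ n, r (g n) (g (n + 1))

/-- One-hole contexts. -/
inductive Ctx (F : Type) (ar : F → ℕ) (V : Type) : Type
  | hole : Ctx F ar V
  | app : (f : F) → (i : Fin (ar f)) → ((j : Fin (ar f)) → j ≠ i → Tm F ar V) →
      Ctx F ar V → Ctx F ar V

/-- Depth of the hole of a context. -/
def Ctx.depth : Ctx F ar V → ℕ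
  | .hole => 0
  | .app _ _ _ C => C.depth + 1

/-- Filling the hole of a context with a term. -/
def Ctx.fill : Ctx F ar V → Tm F ar V → Tm F ar V
  | .hole, s => s
  | .app f i ts C, s => .app f (fun j => if h : j = i then C.fill s else ts j h)

/-- The rule `lr` preserves the interpretation inside every context of depth `n`. -/
def HoldsAtDepth (I : (f : F) → (Fin (ar f) → A) → A) (n : ℕ) (lr : Rule F ar V) : Prop :=
  ∀ (C : Ctx F ar V) (α : V → A), C.depth = n →
    (C.fill lr.1).eval I α = (C.fill lr.2).eval I α

/-- `A` is a C-model for `R`. -/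
def IsCModel (I : (f : F) → (Fin (ar f) → A) → A) (R : Set (Rule F ar V)) : Prop :=
  ∀ lr ∈ R, ∃ n, HoldsAtDepth I n lr

/-- `A` is a model for `R`. -/
def IsModel (I : (f : F) → (Fin (ar f) → A) → A) (R : Set (Rule F ar V)) : Prop :=
  ∀ lr ∈ R, ∀ α : V → A, lr.1.eval I α = lr.2.eval I α

section Label
variable {L : F → Type}

/-- Labeled signature: symbols with a label. -/
abbrev LSym (F : Type) (L : F → Type) := Σ f : F, L f

/-- Arity on the labeled signature. -/
abbrev lar (ar : F → ℕ) : LSym F L → ℕ := fun g => ar g.1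

/-- Semantic labeling of a term with respect to an assignment. -/
def labT (I : (f : F) → (Fin (ar f) → A) → A)
    (lf : ∀ f : F, (Fin (ar f) → A) → L f) (α : V → A) :
    Tm F ar V → Tm (LSym F L) (lar ar) V
  | .var x => .var x
  | .app f ts => .app ⟨f, lf f (fun i => (ts i).eval I α)⟩ (fun i => labT I lf α (ts i))

end Label

/-- Evaluation of ground terms. -/
def geval (I : (f : F) → (Fin (ar f) → A) → A) : Tm F ar Empty → A :=
  Tm.eval I (fun x => x.elim)

/-- Labeling of ground terms. -/
def glab {L : F → Type} (I : (f : F) → (Fin (ar f) → A) → A)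
    (lf : ∀ f : F, (Fin (ar f) → A) → L f) :
    Tm F ar Empty → Tm (LSym F L) (lar ar) Empty :=
  labT I lf (fun x => x.elim)

/-- Terms not containing the symbol `tp`. -/
def tpFree (tp : F) : Tm F ar V → Prop
  | .var _ => True
  | .app f ts => f ≠ tp ∧ ∀ i, tpFree tp (ts i)

/-- The term `top(s)`. -/
def topT (tp : F) (s : Tm F ar V) : Tm F ar V := Tm.app tp (fun _ => s)

/-- Number of occurrences of a variable in a term. -/
def countV [DecidableEq V] (x : V) : Tm F ar V → ℕ
  | .var y => if y = x then 1 else 0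
  | .app _ ts => ∑ i, countV x (ts i)

/-- Linear terms: every variable occurs at most once. -/
def Linear [DecidableEq V] (t : Tm F ar V) : Prop := ∀ x : V, countV x t ≤ 1

/-- Quasi-left-linear TRS. -/
def QuasiLeftLinear [DecidableEq V] (R : Set (Rule F ar V)) : Prop :=
  ∀ lr ∈ R, ¬ Linear lr.1 →
    ∃ lr' ∈ R, Linear lr'.1 ∧ ∃ σ : V → Tm F ar V, lr.1 = lr'.1.subst σ

end TRSStmt

namespace Stmt

open TRSStmt

/-- The iterated refinement `≈_i` of the initial indistinguishability equivalence
    on a redex-algebra. -/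
def eqv {F : Type} {ar : F → ℕ} {A : Type}
    (interp : (f : F) → (Fin (ar f) → A) → A)
    (isRed : (f : F) → (Fin (ar f) → A) → Bool) : ℕ → A → A → Prop
  | 0 => fun a b => ∀ (f : F) (as : Fin (ar f) → A) (i : Fin (ar f)),
      isRed f (Function.update as i a) = isRed f (Function.update as i b)
  | n + 1 => fun a b => eqv interp isRed n a b ∧
      ∀ (f : F) (as : Fin (ar f) → A) (i : Fin (ar f)),
        eqv interp isRed n (interp f (Function.update as i a))
          (interp f (Function.update as i b))

/-- The limit `≈` of the refinement chain. -/
def Eqv {F : Type} {ar : F → ℕ} {A : Type}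
    (interp : (f : F) → (Fin (ar f) → A) → A)
    (isRed : (f : F) → (Fin (ar f) → A) → Bool) (a b : A) : Prop :=
  ∀ n, eqv interp isRed n a b

section Aux

variable {F : Type} {ar : F → ℕ} {A : Type}
    (interp : (f : F) → (Fin (ar f) → A) → A)
    (isRed : (f : F) → (Fin (ar f) → A) → Bool)

lemma eqv_equiv : ∀ n, Equivalence (eqv interp isRed n)
  | 0 =>
    ⟨fun _ _ _ _ => rfl,
     fun h f as i => (h f as i).symm,
     fun h1 h2 f as i => (h1 f as i).trans (h2 f as i)⟩
  | n + 1 => by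
    have ih := eqv_equiv n
    exact ⟨fun a => ⟨ih.refl a, fun _ _ _ => ih.refl _⟩,
           fun h => ⟨ih.symm h.1, fun f as i => ih.symm (h.2 f as i)⟩,
           fun h1 h2 => ⟨ih.trans h1.1 h2.1,
             fun f as i => ih.trans (h1.2 f as i) (h2.2 f as i)⟩⟩

lemma Eqv_equiv : Equivalence (Eqv interp isRed) :=
  ⟨fun a n => (eqv_equiv interp isRed n).refl a,
   fun h n => (eqv_equiv interp isRed n).symm (h n),
   fun h1 h2 n => (eqv_equiv interp isRed n).trans (h1 n) (h2 n)⟩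

lemma Eqv_cong (f : F) (as : Fin (ar f) → A) (i : Fin (ar f)) {a b : A}
    (h : Eqv interp isRed a b) :
    Eqv interp isRed (interp f (Function.update as i a))
      (interp f (Function.update as i b)) :=
  fun n => (h (n + 1)).2 f as i

lemma isRed_multi (f : F) (as bs : Fin (ar f) → A)
    (h : ∀ i, Eqv interp isRed (as i) (bs i)) : isRed f as = isRed f bs := by
  classical
  have key : ∀ S : Finset (Fin (ar f)),
      isRed f (fun i => if i ∈ S then bs i else as i) = isRed f as := by
    intro S
    induction S using Finset.induction_on with
    | empty => simp
    | @insert j S hj ih =>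
        have e1 : (fun i => if i ∈ insert j S then bs i else as i)
            = Function.update (fun i => if i ∈ S then bs i else as i) j (bs j) := by
          funext i
          by_cases hij : i = j
          · subst hij; simp [Function.update]
          · simp [Function.update, hij, Finset.mem_insert]
        have e2 : Function.update (fun i => if i ∈ S then bs i else as i) j (as j)
            = (fun i => if i ∈ S then bs i else as i) := by
          funext i
          by_cases hij : i = j
          · subst hij; simp [Function.update, hj]
          · simp [Function.update, hij]
        rw [e1, ← h j 0 f (fun i => if i ∈ S then bs i else as i) j, e2, ih]
  have hu := key Finset.univ
  simpa using hu.symm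

lemma interp_multi (f : F) (as bs : Fin (ar f) → A)
    (h : ∀ i, Eqv interp isRed (as i) (bs i)) :
    Eqv interp isRed (interp f as) (interp f bs) := by
  classical
  have key : ∀ S : Finset (Fin (ar f)),
      Eqv interp isRed (interp f (fun i => if i ∈ S then bs i else as i))
        (interp f as) := by
    intro S
    induction S using Finset.induction_on with
    | empty =>
        have : (fun i => if i ∈ (∅ : Finset (Fin (ar f))) then bs i else as i) = as := by
          funext i; simp
        rw [this]; exact (Eqv_equiv interp isRed).refl _
    | @insert j S hj ih =>
        have e1 : (fun i => if i ∈ insert j S then bs i else as i)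
            = Function.update (fun i => if i ∈ S then bs i else as i) j (bs j) := by
          funext i
          by_cases hij : i = j
          · subst hij; simp [Function.update]
          · simp [Function.update, hij, Finset.mem_insert]
        have e2 : Function.update (fun i => if i ∈ S then bs i else as i) j (as j)
            = (fun i => if i ∈ S then bs i else as i) := by
          funext i
          by_cases hij : i = j
          · subst hij; simp [Function.update, hj]
          · simp [Function.update, hij]
        rw [e1]
        refine (Eqv_equiv interp isRed).trans
          (Eqv_cong interp isRed f _ j ((Eqv_equiv interp isRed).symm (h j))) ?_
        rw [e2]; exact ih
  have hu := key Finset.univ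
  have : (fun i => if i ∈ (Finset.univ : Finset (Fin (ar f))) then bs i else as i) = bs := by
    funext i; simp
  rw [this] at hu
  exact (Eqv_equiv interp isRed).symm hu

lemma Eqv_of_mk_eq {a b : A}
    (h : Quot.mk (Eqv interp isRed) a = Quot.mk (Eqv interp isRed) b) :
    Eqv interp isRed a b := by
  have he := Quot.eqvGen_exact h
  clear h
  induction he with
  | rel _ _ h => exact h
  | refl _ => exact (Eqv_equiv interp isRed).refl _
  | symm _ _ _ ih => exact (Eqv_equiv interp isRed).symm ih
  | trans _ _ _ _ _ ih1 ih2 => exact (Eqv_equiv interp isRed).trans ih1 ih2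

end Aux

/-- for a (finite) core redex-algebra `A`, the relation `≈` is an
    equivalence, the quotient operations are well-defined (the interpretation and
    `is_red` lift to `A/≈`), the quotient is again a core redex-algebra, and it is
    equivalent to `A`: `L(A/≈) = L(A)`. -/
theorem minimization {F : Type} {ar : F → ℕ} {A : Type} [Finite A]
    (interp : (f : F) → (Fin (ar f) → A) → A)
    (isRed : (f : F) → (Fin (ar f) → A) → Bool)
    (hcore : ∀ a : A, ∃ t : Tm F ar Empty, geval interp t = a) :
    Equivalence (Eqv interp isRed) ∧
    ∃ (interpQ : (f : F) → (Fin (ar f) → Quot (Eqv interp isRed)) →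
        Quot (Eqv interp isRed))
      (isRedQ : (f : F) → (Fin (ar f) → Quot (Eqv interp isRed)) → Bool),
      (∀ (f : F) (as : Fin (ar f) → A),
        interpQ f (fun i => Quot.mk _ (as i)) = Quot.mk _ (interp f as)) ∧
      (∀ (f : F) (as : Fin (ar f) → A),
        isRedQ f (fun i => Quot.mk _ (as i)) = isRed f as) ∧
      (∀ q : Quot (Eqv interp isRed), ∃ t : Tm F ar Empty, geval interpQ t = q) ∧
      (∀ (f : F) (ts : Fin (ar f) → Tm F ar Empty),
        isRedQ f (fun i => geval interpQ (ts i)) =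
          isRed f (fun i => geval interp (ts i))) := by
  classical
  refine ⟨Eqv_equiv interp isRed, ?_⟩
  set interpQ : (f : F) → (Fin (ar f) → Quot (Eqv interp isRed)) →
      Quot (Eqv interp isRed) :=
    fun f qs => Quot.mk _ (interp f (fun i => (qs i).out)) with hIQ
  set isRedQ : (f : F) → (Fin (ar f) → Quot (Eqv interp isRed)) → Bool :=
    fun f qs => isRed f (fun i => (qs i).out) with hRQ
  have hout : ∀ a : A, Eqv interp isRed (Quot.mk (Eqv interp isRed) a).out a := by
    intro a
    exact Eqv_of_mk_eq interp isRed (Quot.out_eq _)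
  have hI : ∀ (f : F) (as : Fin (ar f) → A),
      interpQ f (fun i => Quot.mk _ (as i)) = Quot.mk _ (interp f as) := by
    intro f as
    exact Quot.sound (interp_multi interp isRed f _ _ (fun i => hout (as i)))
  have hR : ∀ (f : F) (as : Fin (ar f) → A),
      isRedQ f (fun i => Quot.mk _ (as i)) = isRed f as := by
    intro f as
    exact isRed_multi interp isRed f _ _ (fun i => hout (as i))
  have hgev : ∀ t : Tm F ar Empty,
      geval interpQ t = Quot.mk _ (geval interp t) := by
    intro t
    induction t with
    | var x => exact x.elim
    | app f ts ih =>
        show interpQ f (fun i => geval interpQ (ts i)) =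
          Quot.mk _ (interp f (fun i => geval interp (ts i)))
        have : (fun i => geval interpQ (ts i)) =
            (fun i => Quot.mk (Eqv interp isRed) (geval interp (ts i))) := by
          funext i; exact ih i
        rw [this]; exact hI f _
  refine ⟨interpQ, isRedQ, hI, hR, ?_, ?_⟩
  · intro q
    obtain ⟨a, ha⟩ := Quot.exists_rep q
    obtain ⟨t, ht⟩ := hcore a
    exact ⟨t, by rw [hgev t, ht, ha]⟩
  · intro f ts
    have : (fun i => geval interpQ (ts i)) =
        (fun i => Quot.mk (Eqv interp isRed) (geval interp (ts i))) := by
      funext i; exact hgev (ts i)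
    rw [this]; exact hR f _

end Stmt
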